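/- Fix q with 1 < q < 2, a relaxation interval ε = [ε₋, ε₊] with 0 < ε₋ ≤ ε₊ < ∞, and let Ω ⊂ ℝ^d be a measurable set of finite Lebesgue measure. Let σ_ε, τ_n, τ_{n+1} ∈ L²(Ω; ℝ^d) and set w_n = clamp_ε(|τ_n|)^{q-2}. Assume: (i) ∫_Ω A*_ε(σ_ε)·(τ_n - σ_ε) dx = 0 (Euler–Lagrange equation for the minimizer σ_ε of J*_ε over the divergence-constrained set), and (ii) ∫_Ω w_n τ_{n+1}·(τ_n - τ_{n+1}) dx = 0 and ∫_Ω w_n τ_{n+1}·(τ_n - σ_ε) dx = 0 (the equations characterizing the Kačanov iterate τ_{n+1}, tested with divergence-free directions). Then there exists a constant C_q < ∞ depending solely on q such that, with δ = C_q^{-1}(ε₋/ε₊)^{2-q}, one has δ (J*_ε(τ_n) - J*_ε(σ_ε)) ≤ J*_ε(τ_n) - J*_ε(τ_{n+1}). -/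

import Mathlib

open Real MeasureTheory
open scoped RealInnerProductSpace

/-- The relaxed integrand `κ*_ε`. -/
noncomputable def kappaStar (q em ep t : ℝ) : ℝ :=
  if t ≤ em then (1/2) * em ^ (q-2) * t^2 + (1/q - 1/2) * em ^ q
  else if t ≤ ep then (1/q) * t ^ q
  else (1/2) * ep ^ (q-2) * t^2 + (1/q - 1/2) * ep ^ q

/-- The relaxed dual energy `J*_ε(τ) = ∫_Ω κ*_ε(|τ|) dx`. -/
noncomputable def Jeps (q em ep : ℝ) {d : ℕ} (Ω : Set (EuclideanSpace ℝ (Fin d)))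
    (τ : EuclideanSpace ℝ (Fin d) → EuclideanSpace ℝ (Fin d)) : ℝ :=
  ∫ x in Ω, kappaStar q em ep ‖τ x‖

/-- `A*_ε(P) = clamp_ε(|P|)^(q-2) P`. -/
noncomputable def Astar (q em ep : ℝ) {d : ℕ} (P : EuclideanSpace ℝ (Fin d)) :
    EuclideanSpace ℝ (Fin d) :=
  (max em (min ‖P‖ ep)) ^ (q-2) • P

section Scalar

variable {q em ep : ℝ}

/-- First-order Bernoulli inequality for exponents in `[0,1]`. -/
lemma bern1 {p r : ℝ} (hp0 : 0 ≤ p) (hp1 : p ≤ 1) (hr : 0 ≤ r) :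
    r ^ p ≤ 1 + p * (r - 1) := by
  have h := Real.geom_mean_le_arith_mean2_weighted hp0 (by linarith : (0:ℝ) ≤ 1 - p) hr
    zero_le_one (by ring)
  rw [Real.one_rpow, mul_one] at h
  linarith

lemma rpow_sub_two_mul_sq {q x : ℝ} (hx : 0 < x) : x ^ (q-2) * x^2 = x ^ q := by
  rw [← Real.rpow_natCast x 2, ← Real.rpow_add hx]
  norm_num

/-- Global formula for the relaxed integrand. -/
lemma kappaStar_eq (hem : 0 < em) (hme : em ≤ ep) (t : ℝ) :
    kappaStar q em ep t
      = (1/2) * (max em (min t ep)) ^ (q-2) * t^2 + (1/q - 1/2) * (max em (min t ep)) ^ q := by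
  unfold kappaStar
  rcases le_or_gt t em with h | h
  · rw [if_pos h, min_eq_left (h.trans hme), max_eq_left h]
  · rw [if_neg (not_le.mpr h)]
    rcases le_or_gt t ep with h2 | h2
    · rw [if_pos h2, min_eq_left h2, max_eq_right h.le]
      have e := rpow_sub_two_mul_sq (q := q) (hem.trans h)
      linarith
    · rw [if_neg (not_le.mpr h2), min_eq_right h2.le, max_eq_right hme]

/-- Core quadratic domination of the `q`-power. -/
lemma quad_bound (hq1 : 1 < q) (hq2 : q < 2) {c t : ℝ} (hc : 0 < c) (ht : 0 ≤ t) :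
    (1/q) * t ^ q ≤ (1/2) * c ^ (q-2) * t^2 + (1/q - 1/2) * c ^ q := by
  have hq0 : 0 < q := by linarith
  have hb := bern1 (p := q/2) (r := t^2 / c^2) (by linarith) (by linarith) (by positivity)
  have h1 : (t^2/c^2 : ℝ) ^ (q/2) = t ^ q / c ^ q := by
    rw [Real.div_rpow (by positivity) (by positivity)]
    congr 1
    · rw [← Real.rpow_natCast t 2, ← Real.rpow_mul ht]; congr 1; push_cast; ring
    · rw [← Real.rpow_natCast c 2, ← Real.rpow_mul hc.le]; congr 1; push_cast; ring
  rw [h1] at hb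
  have hcq : (0:ℝ) < c ^ q := Real.rpow_pos_of_pos hc q
  have hc2 : (0:ℝ) < c ^ (2:ℕ) := by positivity
  have e1 : c ^ (q-2) * c^2 = c ^ q := rpow_sub_two_mul_sq hc
  have key : t ^ q ≤ c ^ q + q/2 * (c ^ (q-2) * t^2 - c ^ q) := by
    have h4 := mul_le_mul_of_nonneg_right hb hcq.le
    rw [div_mul_cancel₀ _ hcq.ne'] at h4
    have e2 : (1 + q / 2 * (t ^ 2 / c ^ 2 - 1)) * c ^ q
        = c ^ q + q/2 * (c ^ (q-2) * t^2 - c ^ q) := by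
      rw [← e1]; field_simp
    linarith [h4, e2.ge, e2.le]
  have hfin := mul_le_mul_of_nonneg_left key (by positivity : (0:ℝ) ≤ 1/q)
  have e3 : 1/q * (c ^ q + q/2 * (c ^ (q-2) * t^2 - c ^ q))
      = (1/2) * c ^ (q-2) * t^2 + (1/q - 1/2) * c ^ q := by
    field_simp; ring
  linarith [hfin, e3.le, e3.ge]

end Scalar
section Scalar2
variable {q em ep : ℝ}

/-- `κ*` is dominated by every admissible quadric. -/
lemma kappaStar_le_quad (hq1 : 1 < q) (hq2 : q < 2) (hem : 0 < em) (hme : em ≤ ep)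
    {c t : ℝ} (ht : 0 ≤ t) (hc1 : em ≤ c) (hc2 : c ≤ ep) :
    kappaStar q em ep t ≤ (1/2) * c ^ (q-2) * t^2 + (1/q - 1/2) * c ^ q := by
  have hc : 0 < c := lt_of_lt_of_le hem hc1
  have hq0 : 0 < q := by linarith
  have hth : (0:ℝ) < 1/q - 1/2 := by
    have : (1:ℝ)/2 < 1/q := one_div_lt_one_div_of_lt hq0 hq2
    linarith
  unfold kappaStar
  rcases le_or_gt t em with h | h
  · rw [if_pos h]
    have hA : c ^ (q-2) ≤ em ^ (q-2) := Real.rpow_le_rpow_of_nonpos hem hc1 (by linarith)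
    have hB := quad_bound (c := c) (t := em) hq1 hq2 hc hem.le
    have e1 : em ^ (q-2) * em^2 = em ^ q := rpow_sub_two_mul_sq hem
    have ht2 : t^2 ≤ em^2 := by nlinarith
    nlinarith [mul_nonneg (sub_nonneg.2 hA) (sub_nonneg.2 ht2)]
  · rw [if_neg (not_le.mpr h)]
    rcases le_or_gt t ep with h2 | h2
    · rw [if_pos h2]
      exact quad_bound hq1 hq2 hc ht
    · rw [if_neg (not_le.mpr h2)]
      have hep : 0 < ep := lt_of_lt_of_le hem hme
      have hA : ep ^ (q-2) ≤ c ^ (q-2) := Real.rpow_le_rpow_of_nonpos hc hc2 (by linarith)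
      have hB := quad_bound (c := c) (t := ep) hq1 hq2 hc hep.le
      have e1 : ep ^ (q-2) * ep^2 = ep ^ q := rpow_sub_two_mul_sq hep
      have ht2 : ep^2 ≤ t^2 := by nlinarith
      nlinarith [mul_nonneg (sub_nonneg.2 hA) (sub_nonneg.2 ht2)]

/-- Second-order Bernoulli, tangent-above form. -/
lemma bernB (hq1 : 1 < q) (hq2 : q < 2) {r : ℝ} (hr0 : 0 ≤ r) (hr1 : r ≤ 1) :
    1 + q * (r - 1) + q*(q-1)/2 * (r - 1)^2 ≤ r ^ q := by
  have hq0 : 0 < q := by linarith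
  set f : ℝ → ℝ := fun x => x ^ q - 1 - q*(x-1) - q*(q-1)/2*(x-1)^2 with hf
  have hderiv : ∀ x ∈ Set.Ioo (0:ℝ) 1, HasDerivAt f
      (q * x ^ (q-1) - q * 1 - q*(q-1)/2 * ((2:ℕ)*(x-1)^1*1)) x := by
    intro x hx
    have h1 : HasDerivAt (fun y : ℝ => y ^ q) (q * x ^ (q-1)) x := by
      simpa using Real.hasDerivAt_rpow_const (x := x) (p := q) (Or.inl hx.1.ne')
    have hid : HasDerivAt (fun y : ℝ => y - 1) 1 x := (hasDerivAt_id x).sub_const 1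
    have h2 : HasDerivAt (fun y : ℝ => q * (y-1)) (q * 1) x := hid.const_mul q
    have h3 : HasDerivAt (fun y : ℝ => (y-1)^2) ((2:ℕ) * (x-1)^1 * 1) x := hid.pow 2
    have h4 : HasDerivAt (fun y : ℝ => q*(q-1)/2 * (y-1)^2)
        (q*(q-1)/2 * ((2:ℕ) * (x-1)^1 * 1)) x := h3.const_mul _
    exact ((h1.sub_const 1).sub h2).sub h4
  have hcont : ContinuousOn f (Set.Icc 0 1) := by
    apply ContinuousOn.sub
    apply ContinuousOn.sub
    apply ContinuousOn.sub
    · exact (Real.continuous_rpow_const hq0.le).continuousOn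
    · exact continuousOn_const
    · exact (continuous_const.mul ((continuous_id.sub continuous_const))).continuousOn
    · exact (continuous_const.mul ((continuous_id.sub continuous_const).pow 2)).continuousOn
  have hanti : AntitoneOn f (Set.Icc 0 1) := by
    apply antitoneOn_of_deriv_nonpos (convex_Icc 0 1) hcont
    · intro x hx
      rw [interior_Icc] at hx
      exact (hderiv x hx).differentiableAt.differentiableWithinAt
    · intro x hx
      rw [interior_Icc] at hx
      rw [(hderiv x hx).deriv]
      have hb := bern1 (p := q-1) (r := x) (by linarith) (by linarith) hx.1.le
      nlinarith [mul_le_mul_of_nonneg_left hb hq0.le]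
  have h0 : f 1 ≤ f r :=
    hanti (Set.mem_Icc.mpr ⟨hr0, hr1⟩) (Set.mem_Icc.mpr ⟨zero_le_one, le_refl 1⟩) hr1
  have e1 : f 1 = 0 := by simp [hf]
  have e2 : f r = r ^ q - 1 - q*(r-1) - q*(q-1)/2*(r-1)^2 := by simp only [hf]
  rw [e1, e2] at h0
  linarith

/-- Second-order Bernoulli, chord form. -/
lemma bernA (hq1 : 1 < q) (hq2 : q < 2) {r : ℝ} (hr0 : 0 ≤ r) (hr1 : r ≤ 1) :
    q*(q-1)/2 * (1-r)^2 ≤ 1 - r ^ q - q * r^(q-1) * (1-r) := by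
  have hq0 : 0 < q := by linarith
  set f : ℝ → ℝ := fun x => 1 - x ^ q - q * (x^(q-1)*(1-x)) - q*(q-1)/2*(1-x)^2 with hf
  have hderiv : ∀ x ∈ Set.Ioo (0:ℝ) 1, HasDerivAt f
      (-(q * x ^ (q-1)) - q * (((q-1) * x ^ (q-2)) * (1-x) + x^(q-1) * (-1))
        - q*(q-1)/2 * ((2:ℕ)*(1-x)^1*(-1))) x := by
    intro x hx
    have h1 : HasDerivAt (fun y : ℝ => y ^ q) (q * x ^ (q-1)) x := by
      simpa using Real.hasDerivAt_rpow_const (x := x) (p := q) (Or.inl hx.1.ne')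
    have h1' : HasDerivAt (fun y : ℝ => y ^ (q-1)) ((q-1) * x ^ (q-2)) x := by
      have := Real.hasDerivAt_rpow_const (x := x) (p := q-1) (Or.inl hx.1.ne')
      convert this using 2
      ring
    have hid : HasDerivAt (fun y : ℝ => 1 - y) (-1) x := by
      simpa using (hasDerivAt_id x).const_sub 1
    have h3 : HasDerivAt (fun y : ℝ => y^(q-1) * (1-y))
        (((q-1) * x ^ (q-2)) * (1-x) + x^(q-1) * (-1)) x := h1'.mul hid
    have h4 : HasDerivAt (fun y : ℝ => q * (y^(q-1)*(1-y)))
        (q * (((q-1) * x ^ (q-2)) * (1-x) + x^(q-1) * (-1))) x := h3.const_mul q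
    have h5 : HasDerivAt (fun y : ℝ => (1-y)^2) ((2:ℕ)*(1-x)^1*(-1)) x := hid.pow 2
    have h6 : HasDerivAt (fun y : ℝ => q*(q-1)/2 * (1-y)^2)
        (q*(q-1)/2 * ((2:ℕ)*(1-x)^1*(-1))) x := h5.const_mul _
    exact ((h1.const_sub 1).sub h4).sub h6
  have hcont : ContinuousOn f (Set.Icc 0 1) := by
    apply ContinuousOn.sub
    apply ContinuousOn.sub
    apply ContinuousOn.sub
    · exact continuousOn_const
    · exact (Real.continuous_rpow_const hq0.le).continuousOn
    · exact (continuous_const.mul ((Real.continuous_rpow_const (by linarith)).mul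
        (continuous_const.sub continuous_id))).continuousOn
    · exact (continuous_const.mul ((continuous_const.sub continuous_id).pow 2)).continuousOn
  have hanti : AntitoneOn f (Set.Icc 0 1) := by
    apply antitoneOn_of_deriv_nonpos (convex_Icc 0 1) hcont
    · intro x hx
      rw [interior_Icc] at hx
      exact (hderiv x hx).differentiableAt.differentiableWithinAt
    · intro x hx
      rw [interior_Icc] at hx
      rw [(hderiv x hx).deriv]
      have hx2 : (1:ℝ) ≤ x ^ (q-2) :=
        Real.one_le_rpow_of_pos_of_le_one_of_nonpos hx.1 hx.2.le (by linarith)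
      have key : 0 ≤ q*(q-1)*(1-x)*(x^(q-2)-1) :=
        mul_nonneg (mul_nonneg (mul_nonneg hq0.le (by linarith)) (by linarith [hx.2]))
          (by linarith)
      push_cast
      nlinarith [key]
  have h0 : f 1 ≤ f r :=
    hanti (Set.mem_Icc.mpr ⟨hr0, hr1⟩) (Set.mem_Icc.mpr ⟨zero_le_one, le_refl 1⟩) hr1
  have e1 : f 1 = 0 := by simp [hf]
  have e2 : f r = 1 - r ^ q - q * (r^(q-1)*(1-r)) - q*(q-1)/2*(1-r)^2 := by simp only [hf]
  rw [e1, e2] at h0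
  linarith

end Scalar2
section Scalar3
variable {q em ep : ℝ}

/-- Homogeneous strong-convexity bound, tangent point below. -/
lemma bernA2 (hq1 : 1 < q) (hq2 : q < 2) {t s : ℝ} (ht : 0 < t) (hts : t ≤ s) :
    1/q * t^q + t^(q-1) * (s-t) + (q-1)/2 * s^(q-2) * (s-t)^2 ≤ 1/q * s^q := by
  have hs : 0 < s := lt_of_lt_of_le ht hts
  have hq0 : 0 < q := by linarith
  have hA := bernA hq1 hq2 (r := t/s) (by positivity) ((div_le_one hs).2 hts)
  have e1 : (t/s)^q = t^q / s^q := Real.div_rpow ht.le hs.le q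
  have e2 : (t/s)^(q-1) = t^(q-1) / s^(q-1) := Real.div_rpow ht.le hs.le _
  have e3 : s^(q-1) = s^q / s := Real.rpow_sub_one hs.ne' q
  have e4 : s^(q-2) = s^q / s / s := by
    rw [show q-2 = q-1-1 by ring, Real.rpow_sub_one hs.ne', Real.rpow_sub_one hs.ne']
  rw [e1, e2] at hA
  have hmul := mul_le_mul_of_nonneg_left hA (by positivity : (0:ℝ) ≤ s^q/q)
  have hsq : (0:ℝ) < s ^ q := Real.rpow_pos_of_pos hs q
  have hsq1 : (0:ℝ) < s ^ (q-1) := Real.rpow_pos_of_pos hs _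
  have EL : s^q/q * (q*(q-1)/2 * (1-t/s)^2) = (q-1)/2 * s^(q-2) * (s-t)^2 := by
    rw [e4]; field_simp
  have ER : s^q/q * (1 - t^q/s^q - q * (t^(q-1)/s^(q-1)) * (1-t/s))
      = 1/q * s^q - 1/q * t^q - t^(q-1) * (s-t) := by
    rw [e3]; field_simp
  rw [EL, ER] at hmul
  linarith

/-- Homogeneous strong-convexity bound, tangent point above. -/
lemma bernB2 (hq1 : 1 < q) (hq2 : q < 2) {t s : ℝ} (hs : 0 < s) (hst : s ≤ t) :
    1/q * t^q + t^(q-1) * (s-t) + (q-1)/2 * t^(q-2) * (s-t)^2 ≤ 1/q * s^q := by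
  have ht : 0 < t := lt_of_lt_of_le hs hst
  have hq0 : 0 < q := by linarith
  have hB := bernB hq1 hq2 (r := s/t) (by positivity) ((div_le_one ht).2 hst)
  have e1 : (s/t)^q = s^q / t^q := Real.div_rpow hs.le ht.le q
  have e3 : t^(q-1) = t^q / t := Real.rpow_sub_one ht.ne' q
  have e4 : t^(q-2) = t^q / t / t := by
    rw [show q-2 = q-1-1 by ring, Real.rpow_sub_one ht.ne', Real.rpow_sub_one ht.ne']
  rw [e1] at hB
  have hmul := mul_le_mul_of_nonneg_left hB (by positivity : (0:ℝ) ≤ t^q/q)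
  have htq : (0:ℝ) < t ^ q := Real.rpow_pos_of_pos ht q
  have EL : t^q/q * (1 + q*(s/t - 1) + q*(q-1)/2*(s/t - 1)^2)
      = 1/q * t^q + t^(q-1) * (s-t) + (q-1)/2 * t^(q-2) * (s-t)^2 := by
    rw [e3, e4]; field_simp
  have ER : t^q/q * (s^q/t^q) = 1/q * s^q := by
    field_simp
  rw [EL, ER] at hmul
  linarith

/-- Monotonicity with gap of the derivative `g(u) = clamp(u)^(q-2) * u`. -/
lemma g_mono (hq1 : 1 < q) (hq2 : q < 2) (hem : 0 < em) (hme : em ≤ ep)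
    {v u : ℝ} (hv : 0 ≤ v) (hvu : v ≤ u) :
    (q-1) * ep^(q-2) * (u - v)
      ≤ (max em (min u ep))^(q-2) * u - (max em (min v ep))^(q-2) * v := by
  have hep : 0 < ep := lt_of_lt_of_le hem hme
  have hPep : (0:ℝ) < ep^(q-2) := Real.rpow_pos_of_pos hep _
  have hEmEp : ep^(q-2) ≤ em^(q-2) := Real.rpow_le_rpow_of_nonpos hem hme (by linarith)
  have hq1' : (0:ℝ) ≤ q - 1 := by linarith
  have hK : (q-1) * ep^(q-2) ≤ ep^(q-2) := by nlinarith
  have hK' : (q-1) * ep^(q-2) ≤ em^(q-2) := hK.trans hEmEp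
  have piece_mid : ∀ a b : ℝ, em ≤ a → a ≤ b → b ≤ ep →
      (q-1) * ep^(q-2) * (b - a) ≤ b^(q-1) - a^(q-1) := by
    intro a b ha hab hbe
    have ha0 : 0 < a := lt_of_lt_of_le hem ha
    have hb0 : 0 < b := lt_of_lt_of_le ha0 hab
    have hB : (0:ℝ) < b^(q-1) := Real.rpow_pos_of_pos hb0 _
    have e1 : b^(q-2) = b^(q-1)/b := by
      rw [show q-2 = q-1-1 by ring, Real.rpow_sub_one hb0.ne']
    have key : a^(q-1) ≤ b^(q-1) + (q-1) * b^(q-2) * (a - b) := by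
      have hb' := bern1 (p := q-1) (r := a/b) hq1' (by linarith) (by positivity)
      calc a^(q-1) = (a/b)^(q-1) * b^(q-1) := by
            rw [← Real.mul_rpow (by positivity) hb0.le, div_mul_cancel₀ _ hb0.ne']
        _ ≤ (1 + (q-1)*(a/b-1)) * b^(q-1) := mul_le_mul_of_nonneg_right hb' hB.le
        _ = b^(q-1) + (q-1) * b^(q-2) * (a - b) := by rw [e1]; field_simp
    have hb2 : ep^(q-2) ≤ b^(q-2) := Real.rpow_le_rpow_of_nonpos hb0 hbe (by linarith)
    nlinarith [mul_nonneg (mul_nonneg hq1' (sub_nonneg.2 hb2)) (sub_nonneg.2 hab)]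
  have hclow : ∀ t : ℝ, t ≤ em → (max em (min t ep)) = em := fun t h => by
    rw [min_eq_left (h.trans hme), max_eq_left h]
  have hcmid : ∀ t : ℝ, em ≤ t → t ≤ ep → (max em (min t ep)) = t := fun t h1 h2 => by
    rw [min_eq_left h2, max_eq_right h1]
  have hchigh : ∀ t : ℝ, ep ≤ t → (max em (min t ep)) = ep := fun t h => by
    rw [min_eq_right h, max_eq_right hme]
  have eem : em^(q-2) * em = em^(q-1) := by
    rw [show q-1 = (q-2)+1 by ring, Real.rpow_add_one hem.ne']
  have eep : ep^(q-2) * ep = ep^(q-1) := by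
    rw [show q-1 = (q-2)+1 by ring, Real.rpow_add_one hep.ne']
  rcases le_total u em with hue | hue
  · rw [hclow u hue, hclow v (hvu.trans hue)]
    nlinarith [mul_le_mul_of_nonneg_right hK' (by linarith : (0:ℝ) ≤ u - v)]
  · rcases le_total u ep with hup | hup
    · rcases le_total v em with hve | hve
      · rw [hcmid u hue hup, hclow v hve]
        have h1 := piece_mid em u le_rfl hue hup
        have eu : u^(q-2) * u = u^(q-1) := by
          rw [show q-1 = (q-2)+1 by ring, Real.rpow_add_one (ne_of_gt (lt_of_lt_of_le hem hue))]
        nlinarith [h1, eu, eem, mul_le_mul_of_nonneg_right hK' (by linarith : (0:ℝ) ≤ em - v)]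
      · rw [hcmid u hue hup, hcmid v hve (hvu.trans hup)]
        have h1 := piece_mid v u hve hvu hup
        have eu : u^(q-2) * u = u^(q-1) := by
          rw [show q-1 = (q-2)+1 by ring, Real.rpow_add_one (ne_of_gt (lt_of_lt_of_le hem hue))]
        have ev : v^(q-2) * v = v^(q-1) := by
          rw [show q-1 = (q-2)+1 by ring,
            Real.rpow_add_one (ne_of_gt (lt_of_lt_of_le hem hve))]
        nlinarith
    · rcases le_total v em with hve | hve
      · rw [hchigh u hup, hclow v hve]
        have h1 := piece_mid em ep le_rfl hme le_rfl
        nlinarith [h1, eem, eep,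
          mul_le_mul_of_nonneg_right hK' (by linarith : (0:ℝ) ≤ em - v),
          mul_le_mul_of_nonneg_right hK (by linarith : (0:ℝ) ≤ u - ep)]
      · rcases le_total v ep with hvp | hvp
        · rw [hchigh u hup, hcmid v hve hvp]
          have h1 := piece_mid v ep hve hvp le_rfl
          have ev : v^(q-2) * v = v^(q-1) := by
            rw [show q-1 = (q-2)+1 by ring,
              Real.rpow_add_one (ne_of_gt (lt_of_lt_of_le hem hve))]
          nlinarith [h1, ev, eep,
            mul_le_mul_of_nonneg_right hK (by linarith : (0:ℝ) ≤ u - ep)]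
        · rw [hchigh u hup, hchigh v hvp]
          nlinarith [mul_le_mul_of_nonneg_right hK (by linarith : (0:ℝ) ≤ u - v)]
end Scalar3
section Scalar4
variable {q em ep : ℝ}

lemma kv1 (h : t ≤ em) :
    kappaStar q em ep t = (1/2) * em ^ (q-2) * t^2 + (1/q - 1/2) * em ^ q := by
  unfold kappaStar; rw [if_pos h]

lemma kv2 (hem : 0 < em) {t : ℝ} (h1 : em ≤ t) (h2 : t ≤ ep) :
    kappaStar q em ep t = (1/q) * t ^ q := by
  unfold kappaStar
  rcases le_or_gt t em with h | h
  · have ht : t = em := le_antisymm h h1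
    subst ht
    rw [if_pos le_rfl]
    have e := rpow_sub_two_mul_sq (q := q) hem
    linarith
  · rw [if_neg (not_le.mpr h), if_pos h2]

lemma kv3 (hem : 0 < em) (hme : em ≤ ep) {t : ℝ} (h : ep ≤ t) :
    kappaStar q em ep t = (1/2) * ep ^ (q-2) * t^2 + (1/q - 1/2) * ep ^ q := by
  unfold kappaStar
  rcases le_or_gt t em with h1 | h1
  · have he : em = ep := le_antisymm hme (h.trans h1)
    rw [if_pos h1, he]
  · rw [if_neg (not_le.mpr h1)]
    rcases le_or_gt t ep with h2 | h2
    · have ht : t = ep := le_antisymm h2 h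
      subst ht
      rw [if_pos le_rfl]
      have e := rpow_sub_two_mul_sq (q := q) (lt_of_lt_of_le hem hme)
      linarith
    · rw [if_neg (not_le.mpr h2)]

/-- Gluing of tangent inequalities. -/
lemma glue {κ0 kt km ks gt gm t m s : ℝ}
    (h1 : kt + gt*(m-t) + κ0/2*(m-t)^2 ≤ km)
    (h2 : km + gm*(s-m) + κ0/2*(s-m)^2 ≤ ks)
    (h3 : κ0*(m-t)*(s-m) ≤ (gm-gt)*(s-m)) :
    kt + gt*(s-t) + κ0/2*(s-t)^2 ≤ ks := by nlinarith [h1, h2, h3]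

/-- Region tangent: low region. -/
lemma RT1 (hq1 : 1 < q) (hq2 : q < 2) (hem : 0 < em) (hme : em ≤ ep)
    {t s : ℝ} (hte : t ≤ em) (hse : s ≤ em) :
    kappaStar q em ep t + em^(q-2)*t*(s-t) + (q-1)*ep^(q-2)/2*(s-t)^2
      ≤ kappaStar q em ep s := by
  rw [kv1 hte, kv1 hse]
  have hep : 0 < ep := lt_of_lt_of_le hem hme
  have hEmEp : ep^(q-2) ≤ em^(q-2) := Real.rpow_le_rpow_of_nonpos hem hme (by linarith)
  have hPep : (0:ℝ) < ep^(q-2) := Real.rpow_pos_of_pos hep _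
  have hK' : (q-1) * ep^(q-2) ≤ em^(q-2) := by nlinarith
  nlinarith [mul_nonneg (sub_nonneg.2 hK') (sq_nonneg (s-t))]

/-- Region tangent: middle region. -/
lemma RT2 (hq1 : 1 < q) (hq2 : q < 2) (hem : 0 < em) (hme : em ≤ ep)
    {t s : ℝ} (ht1 : em ≤ t) (ht2 : t ≤ ep) (hs1 : em ≤ s) (hs2 : s ≤ ep) :
    kappaStar q em ep t + t^(q-1)*(s-t) + (q-1)*ep^(q-2)/2*(s-t)^2
      ≤ kappaStar q em ep s := by
  rw [kv2 hem ht1 ht2, kv2 hem hs1 hs2]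
  have ht0 : 0 < t := lt_of_lt_of_le hem ht1
  have hs0 : 0 < s := lt_of_lt_of_le hem hs1
  have hq1' : (0:ℝ) ≤ (q-1)/2 := by linarith
  rcases le_total t s with h | h
  · have key := bernA2 hq1 hq2 ht0 h
    have hw : ep^(q-2) ≤ s^(q-2) := Real.rpow_le_rpow_of_nonpos hs0 hs2 (by linarith)
    nlinarith [key, mul_nonneg (mul_nonneg hq1' (sub_nonneg.2 hw)) (sq_nonneg (s-t))]
  · have key := bernB2 hq1 hq2 hs0 h
    have hw : ep^(q-2) ≤ t^(q-2) := Real.rpow_le_rpow_of_nonpos ht0 ht2 (by linarith)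
    nlinarith [key, mul_nonneg (mul_nonneg hq1' (sub_nonneg.2 hw)) (sq_nonneg (s-t))]

/-- Region tangent: high region. -/
lemma RT3 (hq1 : 1 < q) (hq2 : q < 2) (hem : 0 < em) (hme : em ≤ ep)
    {t s : ℝ} (hte : ep ≤ t) (hse : ep ≤ s) :
    kappaStar q em ep t + ep^(q-2)*t*(s-t) + (q-1)*ep^(q-2)/2*(s-t)^2
      ≤ kappaStar q em ep s := by
  rw [kv3 hem hme hte, kv3 hem hme hse]
  have hep : 0 < ep := lt_of_lt_of_le hem hme
  have hPep : (0:ℝ) < ep^(q-2) := Real.rpow_pos_of_pos hep _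
  nlinarith [mul_nonneg (by nlinarith : (0:ℝ) ≤ ep^(q-2) - (q-1)*ep^(q-2)) (sq_nonneg (s-t))]

set_option maxHeartbeats 1000000 in
/-- Scalar strong convexity of `κ*` with modulus `(q-1) ε₊^(q-2)`. -/
lemma sc_scalar (hq1 : 1 < q) (hq2 : q < 2) (hem : 0 < em) (hme : em ≤ ep)
    {t s : ℝ} (ht : 0 ≤ t) (hs : 0 ≤ s) :
    kappaStar q em ep t + (max em (min t ep))^(q-2)*t*(s-t) + (q-1)*ep^(q-2)/2*(s-t)^2
      ≤ kappaStar q em ep s := by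
  have hep : 0 < ep := lt_of_lt_of_le hem hme
  have hclow : ∀ x : ℝ, x ≤ em → (max em (min x ep)) = em := fun x h => by
    rw [min_eq_left (h.trans hme), max_eq_left h]
  have hcmid : ∀ x : ℝ, em ≤ x → x ≤ ep → (max em (min x ep)) = x := fun x h1 h2 => by
    rw [min_eq_left h2, max_eq_right h1]
  have hchigh : ∀ x : ℝ, ep ≤ x → (max em (min x ep)) = ep := fun x h => by
    rw [min_eq_right h, max_eq_right hme]
  have eem : em^(q-2) * em = em^(q-1) := by
    rw [show q-1 = (q-2)+1 by ring, Real.rpow_add_one hem.ne']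
  have eep : ep^(q-2) * ep = ep^(q-1) := by
    rw [show q-1 = (q-2)+1 by ring, Real.rpow_add_one hep.ne']
  -- convenience: the gap-monotonicity in raw form
  have gm := fun (v u : ℝ) (hv : 0 ≤ v) (hvu : v ≤ u) => g_mono hq1 hq2 hem hme hv hvu
  rcases le_total t em with htm | htm
  · rw [hclow t htm]
    rcases le_total s em with hsm | hsm
    · exact RT1 hq1 hq2 hem hme htm hsm
    · -- t low, s above em : glue at em (and possibly at ep)
      have h1 : kappaStar q em ep t + em^(q-2)*t*(em-t) + (q-1)*ep^(q-2)/2*(em-t)^2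
          ≤ kappaStar q em ep em := RT1 hq1 hq2 hem hme htm le_rfl
      rcases le_total s ep with hsp | hsp
      · have h2 : kappaStar q em ep em + em^(q-1)*(s-em) + (q-1)*ep^(q-2)/2*(s-em)^2
            ≤ kappaStar q em ep s := RT2 hq1 hq2 hem hme le_rfl hme hsm hsp
        have hg := gm t em ht htm
        rw [hclow t htm, hclow em le_rfl] at hg
        have hx : (q-1)*ep^(q-2)*(em-t) ≤ em^(q-1) - em^(q-2)*t := by linarith [hg, eem]
        exact glue h1 h2 (by nlinarith [mul_le_mul_of_nonneg_right hx (by linarith : (0:ℝ) ≤ s - em)])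
      · -- double glue: t -> em -> ep -> s
        have h2 : kappaStar q em ep em + em^(q-1)*(ep-em) + (q-1)*ep^(q-2)/2*(ep-em)^2
            ≤ kappaStar q em ep ep := RT2 hq1 hq2 hem hme le_rfl hme hme le_rfl
        have hg := gm t em ht htm
        rw [hclow t htm, hclow em le_rfl] at hg
        have hx : (q-1)*ep^(q-2)*(em-t) ≤ em^(q-1) - em^(q-2)*t := by linarith [hg, eem]
        have h12 : kappaStar q em ep t + em^(q-2)*t*(ep-t) + (q-1)*ep^(q-2)/2*(ep-t)^2
            ≤ kappaStar q em ep ep := glue h1 h2 (by nlinarith [mul_le_mul_of_nonneg_right hx (by linarith : (0:ℝ) ≤ ep - em)])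
        have h3 : kappaStar q em ep ep + ep^(q-2)*ep*(s-ep) + (q-1)*ep^(q-2)/2*(s-ep)^2
            ≤ kappaStar q em ep s := RT3 hq1 hq2 hem hme le_rfl hsp
        have hg2 := gm t ep ht (htm.trans hme)
        rw [hclow t htm, hchigh ep le_rfl] at hg2
        exact glue h12 h3 (by nlinarith [mul_le_mul_of_nonneg_right hg2 (by linarith : (0:ℝ) ≤ s - ep)])
  · rcases le_total t ep with htp | htp
    · rw [hcmid t htm htp]
      have egt : t^(q-2)*t = t^(q-1) := by
        rw [show q-1 = (q-2)+1 by ring, Real.rpow_add_one (ne_of_gt (lt_of_lt_of_le hem htm))]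
      rw [egt]
      rcases le_total s em with hsm | hsm
      · -- t mid, s low : glue downward at em
        have h1 : kappaStar q em ep t + t^(q-1)*(em-t) + (q-1)*ep^(q-2)/2*(em-t)^2
            ≤ kappaStar q em ep em := RT2 hq1 hq2 hem hme htm htp le_rfl hme
        have h2 : kappaStar q em ep em + em^(q-2)*em*(s-em) + (q-1)*ep^(q-2)/2*(s-em)^2
            ≤ kappaStar q em ep s := RT1 hq1 hq2 hem hme le_rfl hsm
        have hg := gm em t hem.le htm
        rw [hclow em le_rfl, hcmid t htm htp] at hg
        have hx : (q-1)*ep^(q-2)*(t-em) ≤ t^(q-1) - em^(q-2)*em := by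
          rw [← egt]; linarith
        exact glue h1 h2 (by nlinarith [mul_le_mul_of_nonneg_right hx (by linarith : (0:ℝ) ≤ em - s)])
      · rcases le_total s ep with hsp | hsp
        · exact RT2 hq1 hq2 hem hme htm htp hsm hsp
        · -- t mid, s high : glue at ep
          have h1 : kappaStar q em ep t + t^(q-1)*(ep-t) + (q-1)*ep^(q-2)/2*(ep-t)^2
              ≤ kappaStar q em ep ep := RT2 hq1 hq2 hem hme htm htp hme le_rfl
          have h2 : kappaStar q em ep ep + ep^(q-2)*ep*(s-ep) + (q-1)*ep^(q-2)/2*(s-ep)^2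
              ≤ kappaStar q em ep s := RT3 hq1 hq2 hem hme le_rfl hsp
          have hg := gm t ep (le_trans hem.le htm) htp
          rw [hcmid t htm htp, hchigh ep le_rfl] at hg
          have hx : (q-1)*ep^(q-2)*(ep-t) ≤ ep^(q-2)*ep - t^(q-1) := by
            rw [← egt]; linarith
          exact glue h1 h2 (by nlinarith [mul_le_mul_of_nonneg_right hx (by linarith : (0:ℝ) ≤ s - ep)])
    · rw [hchigh t htp]
      have hg := gm ep t hep.le htp
      rw [hchigh ep le_rfl, hchigh t htp] at hg
      -- hg : κ0 (t - ep) ≤ ep^(q-2) t - ep^(q-2) ep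
      rcases le_total s ep with hsp | hsp
      · -- t high, s at most ep : glue downward at ep
        have h1 : kappaStar q em ep t + ep^(q-2)*t*(ep-t) + (q-1)*ep^(q-2)/2*(ep-t)^2
            ≤ kappaStar q em ep ep := RT3 hq1 hq2 hem hme htp le_rfl
        rcases le_total s em with hsm | hsm
        · -- further glue at em
          have h2 : kappaStar q em ep ep + ep^(q-1)*(em-ep) + (q-1)*ep^(q-2)/2*(em-ep)^2
              ≤ kappaStar q em ep em := RT2 hq1 hq2 hem hme hme le_rfl le_rfl hme
          have hx : (q-1)*ep^(q-2)*(t-ep) ≤ ep^(q-2)*t - ep^(q-1) := by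
            rw [← eep]; linarith
          have h12 : kappaStar q em ep t + ep^(q-2)*t*(em-t) + (q-1)*ep^(q-2)/2*(em-t)^2
              ≤ kappaStar q em ep em := glue h1 h2 (by nlinarith [mul_le_mul_of_nonneg_right hx (by linarith : (0:ℝ) ≤ ep - em)])
          have h3 : kappaStar q em ep em + em^(q-2)*em*(s-em) + (q-1)*ep^(q-2)/2*(s-em)^2
              ≤ kappaStar q em ep s := RT1 hq1 hq2 hem hme le_rfl hsm
          have hg2 := gm em t hem.le (hme.trans htp)
          rw [hclow em le_rfl, hchigh t htp] at hg2
          exact glue h12 h3 (by nlinarith [mul_le_mul_of_nonneg_right hg2 (by linarith : (0:ℝ) ≤ em - s)])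
        · have h2 : kappaStar q em ep ep + ep^(q-1)*(s-ep) + (q-1)*ep^(q-2)/2*(s-ep)^2
              ≤ kappaStar q em ep s := RT2 hq1 hq2 hem hme hme le_rfl hsm hsp
          have hx : (q-1)*ep^(q-2)*(t-ep) ≤ ep^(q-2)*t - ep^(q-1) := by
            rw [← eep]; linarith
          exact glue h1 h2 (by nlinarith [mul_le_mul_of_nonneg_right hx (by linarith : (0:ℝ) ≤ ep - s)])
      · exact RT3 hq1 hq2 hem hme htp hsp
end Scalar4
section Vector
variable {q em ep : ℝ}

lemma kappaStar_nonneg (hq1 : 1 < q) (hq2 : q < 2) (hem : 0 < em) (hme : em ≤ ep)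
    {t : ℝ} (ht : 0 ≤ t) : 0 ≤ kappaStar q em ep t := by
  rw [kappaStar_eq hem hme]
  have h1 : (0:ℝ) < max em (min t ep) := lt_of_lt_of_le hem (le_max_left _ _)
  have h2 := Real.rpow_pos_of_pos h1 (q-2)
  have h3 := Real.rpow_pos_of_pos h1 q
  have hq0 : (0:ℝ) < q := by linarith
  have hth : (0:ℝ) < 1/q - 1/2 := by
    have : (1:ℝ)/2 < 1/q := one_div_lt_one_div_of_lt hq0 hq2
    linarith
  nlinarith [sq_nonneg t]

/-- Vector strong convexity of `P ↦ κ*(‖P‖)`. -/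
lemma sc_vector {d : ℕ} (hq1 : 1 < q) (hq2 : q < 2) (hem : 0 < em) (hme : em ≤ ep)
    (u z : EuclideanSpace ℝ (Fin d)) :
    kappaStar q em ep ‖u‖ + (max em (min ‖u‖ ep))^(q-2) * ⟪u, z - u⟫
        + (q-1)*ep^(q-2)/2 * ‖z - u‖^2
      ≤ kappaStar q em ep ‖z‖ := by
  have hep : 0 < ep := lt_of_lt_of_le hem hme
  have h1 := sc_scalar (t := ‖u‖) (s := ‖z‖) hq1 hq2 hem hme (norm_nonneg u) (norm_nonneg z)
  have hiz : ⟪u, z⟫ ≤ ‖u‖ * ‖z‖ := real_inner_le_norm u z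
  have hnz : ‖z - u‖^2 = ‖z‖^2 - 2*⟪z, u⟫ + ‖u‖^2 := norm_sub_sq_real z u
  have hcomm : ⟪z, u⟫ = ⟪u, z⟫ := real_inner_comm u z
  have hinner : ⟪u, z - u⟫ = ⟪u, z⟫ - ‖u‖^2 := by
    rw [inner_sub_right, real_inner_self_eq_norm_sq]
  have hc0 : 0 < max em (min ‖u‖ ep) := lt_of_lt_of_le hem (le_max_left _ _)
  have hwge : ep^(q-2) ≤ (max em (min ‖u‖ ep))^(q-2) :=
    Real.rpow_le_rpow_of_nonpos hc0 (max_le hme (min_le_right _ _)) (by linarith)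
  have hwκ : (q-1)*ep^(q-2) ≤ (max em (min ‖u‖ ep))^(q-2) := by
    nlinarith [Real.rpow_pos_of_pos hep (q-2)]
  rw [hinner, hnz, hcomm]
  nlinarith [h1, mul_nonneg (sub_nonneg.2 hwκ) (sub_nonneg.2 hiz)]

end Vector

set_option maxHeartbeats 1000000 in
/-- exponential decay, Theorem 3.1 of the paper. There is a constant
`C_q < ∞` depending solely on `q` such that, with `δ = C_q⁻¹ (ε₋/ε₊)^(2-q)`, the Kačanov
iterate `τ_{n+1}` (characterized by the weighted orthogonality relations (ii)) and the
minimizer `σ_ε` (characterized by the Euler–Lagrange relation (i)) satisfy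
`δ (J*_ε(τ_n) - J*_ε(σ_ε)) ≤ J*_ε(τ_n) - J*_ε(τ_{n+1})`. -/
theorem stmt10 (q : ℝ) (hq1 : 1 < q) (hq2 : q < 2) :
    ∃ Cq : ℝ, 0 < Cq ∧
      ∀ (d : ℕ) (em ep : ℝ), 0 < em → em ≤ ep →
        ∀ (Ω : Set (EuclideanSpace ℝ (Fin d))), MeasurableSet Ω → volume Ω < ⊤ →
          ∀ (σe τn τn1 : EuclideanSpace ℝ (Fin d) → EuclideanSpace ℝ (Fin d)),
            Measurable σe → Measurable τn → Measurable τn1 →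
            IntegrableOn (fun x => ‖σe x‖ ^ 2) Ω volume →
            IntegrableOn (fun x => ‖τn x‖ ^ 2) Ω volume →
            IntegrableOn (fun x => ‖τn1 x‖ ^ 2) Ω volume →
            -- (i) Euler–Lagrange equation for the minimizer σ_ε
            (∫ x in Ω, ⟪Astar q em ep (σe x), τn x - σe x⟫) = 0 →
            -- (ii) equations characterizing the Kačanov iterate τ_{n+1}
            (∫ x in Ω, (max em (min ‖τn x‖ ep)) ^ (q-2) * ⟪τn1 x, τn x - τn1 x⟫) = 0 →
            (∫ x in Ω, (max em (min ‖τn x‖ ep)) ^ (q-2) * ⟪τn1 x, τn x - σe x⟫) = 0 →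
            Cq⁻¹ * (em / ep) ^ (2-q) * (Jeps q em ep Ω τn - Jeps q em ep Ω σe)
              ≤ Jeps q em ep Ω τn - Jeps q em ep Ω τn1 := by
  have hq0 : (0:ℝ) < q := by linarith
  refine ⟨2/(q-1), div_pos two_pos (by linarith), ?_⟩
  intro d em ep hem hme Ω hΩ hΩfin σe τn τn1 hσm hτnm hτn1m hσ2 hτn2 hτn12 _hEL hO1 hO2
  have hep : 0 < ep := lt_of_lt_of_le hem hme
  rw [inv_div]
  simp only [Jeps]
  set w : EuclideanSpace ℝ (Fin d) → ℝ := fun x => (max em (min ‖τn x‖ ep))^(q-2) with hwdef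
  set θ : ℝ := (q-1)/2 * (em/ep)^(2-q) with hθdef
  have hθpos : 0 < θ := by
    rw [hθdef]
    exact mul_pos (div_pos (by linarith) two_pos) (Real.rpow_pos_of_pos (div_pos hem hep) _)
  have hO1' : (∫ x in Ω, w x * ⟪τn1 x, τn x - τn1 x⟫) = 0 := by
    simp only [hwdef]; exact hO1
  have hO2' : (∫ x in Ω, w x * ⟪τn1 x, τn x - σe x⟫) = 0 := by
    simp only [hwdef]; exact hO2
  -- pointwise facts about w
  have hcpos : ∀ x, (0:ℝ) < max em (min ‖τn x‖ ep) :=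
    fun x => lt_of_lt_of_le hem (le_max_left _ _)
  have hwpos : ∀ x, 0 < w x := fun x => Real.rpow_pos_of_pos (hcpos x) _
  have hwle : ∀ x, w x ≤ em^(q-2) := fun x =>
    Real.rpow_le_rpow_of_nonpos hem (le_max_left _ _) (by linarith)
  have hθw : ∀ x, θ * w x ≤ (q-1)*ep^(q-2)/2 := by
    intro x
    have h1 : θ * w x ≤ θ * em^(q-2) := mul_le_mul_of_nonneg_left (hwle x) hθpos.le
    have h2 : (em/ep)^(2-q) * em^(q-2) = ep^(q-2) := by
      rw [Real.div_rpow hem.le hep.le, div_mul_eq_mul_div, ← Real.rpow_add hem,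
        show (2-q)+(q-2) = 0 by ring, Real.rpow_zero, one_div,
        ← Real.rpow_neg hep.le, show -(2-q) = q-2 by ring]
    calc θ * w x ≤ θ * em^(q-2) := h1
      _ = (q-1)/2 * ((em/ep)^(2-q) * em^(q-2)) := by rw [hθdef]; ring
      _ = (q-1)*ep^(q-2)/2 := by rw [h2]; ring
  -- measurability of w
  have hwm : Measurable w := by
    have hc : Continuous fun t : ℝ => (max em (min t ep))^(q-2) := by
      apply Continuous.rpow_const
      · exact continuous_const.max (continuous_id.min continuous_const)
      · exact fun t => Or.inl (ne_of_gt (lt_of_lt_of_le hem (le_max_left _ _)))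
    exact (hc.measurable).comp hτnm.norm
  -- integrability: master lemma for weighted inner products
  have intW : ∀ (f g : EuclideanSpace ℝ (Fin d) → EuclideanSpace ℝ (Fin d)),
      Measurable f → Measurable g →
      IntegrableOn (fun x => ‖f x‖^2) Ω volume → IntegrableOn (fun x => ‖g x‖^2) Ω volume →
      IntegrableOn (fun x => w x * ⟪f x, g x⟫) Ω volume := by
    intro f g hf hg hf2 hg2
    apply Integrable.mono' ((hf2.add hg2).const_mul (em^(q-2)/2))
    · exact (hwm.mul (hf.inner hg)).aestronglyMeasurable
    · filter_upwards with x
      simp only [Pi.add_apply]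
      rw [Real.norm_eq_abs, abs_mul, abs_of_pos (hwpos x)]
      have h1 : |⟪f x, g x⟫| ≤ ‖f x‖*‖g x‖ := abs_real_inner_le_norm _ _
      have h2 : (0:ℝ) < em^(q-2) := Real.rpow_pos_of_pos hem _
      nlinarith [mul_nonneg (sub_nonneg.2 (hwle x)) (abs_nonneg (⟪f x, g x⟫ : ℝ)),
        mul_nonneg (hwpos x).le (sub_nonneg.2 h1), sq_nonneg (‖f x‖ - ‖g x‖),
        norm_nonneg (f x), norm_nonneg (g x)]
  -- squared norms of differences are integrable
  have hsub2 : ∀ (f g : EuclideanSpace ℝ (Fin d) → EuclideanSpace ℝ (Fin d)),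
      Measurable f → Measurable g →
      IntegrableOn (fun x => ‖f x‖^2) Ω volume → IntegrableOn (fun x => ‖g x‖^2) Ω volume →
      IntegrableOn (fun x => ‖f x - g x‖^2) Ω volume := by
    intro f g hf hg hf2 hg2
    apply Integrable.mono' ((hf2.add hg2).const_mul 2)
    · exact (((hf.sub hg).norm).pow_const 2).aestronglyMeasurable
    · filter_upwards with x
      simp only [Pi.add_apply]
      rw [Real.norm_eq_abs, abs_of_nonneg (sq_nonneg _)]
      nlinarith [norm_sub_le (f x) (g x), sq_nonneg (‖f x‖ - ‖g x‖),
        norm_nonneg (f x), norm_nonneg (g x), norm_nonneg (f x - g x)]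
  -- integrability of relaxed energies
  have hκint : ∀ (f : EuclideanSpace ℝ (Fin d) → EuclideanSpace ℝ (Fin d)),
      Measurable f → IntegrableOn (fun x => ‖f x‖^2) Ω volume →
      IntegrableOn (fun x => kappaStar q em ep ‖f x‖) Ω volume := by
    intro f hf hf2
    apply Integrable.mono' ((hf2.const_mul (em^(q-2)/2)).add
      ((integrableOn_const_iff (C := (1/q-1/2)*em^q)).mpr (Or.inr hΩfin)))
    · have heq : (fun x => kappaStar q em ep ‖f x‖) = fun x =>
          (1/2)*(max em (min ‖f x‖ ep))^(q-2)*‖f x‖^2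
            + (1/q-1/2)*(max em (min ‖f x‖ ep))^q := by
        funext x; exact kappaStar_eq hem hme _
      rw [heq]
      have hb : Continuous fun t : ℝ => max em (min t ep) :=
        continuous_const.max (continuous_id.min continuous_const)
      have h1 : Continuous fun t : ℝ => (max em (min t ep))^(q-2) :=
        hb.rpow_const (fun t => Or.inl (ne_of_gt (lt_of_lt_of_le hem (le_max_left _ _))))
      have h2 : Continuous fun t : ℝ => (max em (min t ep))^q :=
        hb.rpow_const (fun t => Or.inl (ne_of_gt (lt_of_lt_of_le hem (le_max_left _ _))))
      have hc : Continuous fun t : ℝ =>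
          (1/2)*(max em (min t ep))^(q-2)*t^2 + (1/q-1/2)*(max em (min t ep))^q :=
        ((continuous_const.mul h1).mul (continuous_pow 2)).add (continuous_const.mul h2)
      exact ((hc.measurable).comp hf.norm).aestronglyMeasurable
    · filter_upwards with x
      simp only [Pi.add_apply]
      have hnn := kappaStar_nonneg hq1 hq2 hem hme (norm_nonneg (f x))
      have hub := kappaStar_le_quad (c := em) (t := ‖f x‖) hq1 hq2 hem hme
        (norm_nonneg _) le_rfl hme
      rw [Real.norm_eq_abs, abs_of_nonneg hnn]
      linarith
  -- instances
  have hdm : Measurable (fun x => τn x - σe x) := hτnm.sub hσm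
  have hem2 : Measurable (fun x => τn x - τn1 x) := hτnm.sub hτn1m
  have hd2 : IntegrableOn (fun x => ‖τn x - σe x‖^2) Ω volume := hsub2 τn σe hτnm hσm hτn2 hσ2
  have he2 : IntegrableOn (fun x => ‖τn x - τn1 x‖^2) Ω volume :=
    hsub2 τn τn1 hτnm hτn1m hτn2 hτn12
  set v : EuclideanSpace ℝ (Fin d) → EuclideanSpace ℝ (Fin d) :=
    fun x => (τn x - τn1 x) - θ • (τn x - σe x) with hvdef
  have hvm : Measurable v := hem2.sub (hdm.const_smul θ)
  have hv2 : IntegrableOn (fun x => ‖v x‖^2) Ω volume := by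
    apply Integrable.mono' ((he2.add (hd2.const_mul (θ^2))).const_mul 2)
    · exact ((hvm.norm).pow_const 2).aestronglyMeasurable
    · filter_upwards with x
      simp only [Pi.add_apply]
      rw [Real.norm_eq_abs, abs_of_nonneg (sq_nonneg _)]
      have h1 : ‖v x‖ ≤ ‖τn x - τn1 x‖ + θ * ‖τn x - σe x‖ := by
        rw [hvdef]
        refine (norm_sub_le _ _).trans ?_
        rw [norm_smul, Real.norm_eq_abs, abs_of_pos hθpos]
      nlinarith [norm_nonneg (v x), norm_nonneg (τn x - τn1 x), norm_nonneg (τn x - σe x),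
        sq_nonneg (‖τn x - τn1 x‖ - θ*‖τn x - σe x‖), mul_nonneg hθpos.le (norm_nonneg (τn x - σe x))]
  have i11 := intW τn τn hτnm hτnm hτn2 hτn2
  have i22 := intW τn1 τn1 hτn1m hτn1m hτn12 hτn12
  have iM := intW τn (fun x => τn x - σe x) hτnm hdm hτn2 hd2
  have iV := intW (fun x => τn x - σe x) (fun x => τn x - σe x) hdm hdm hd2 hd2
  have iP := intW v v hvm hvm hv2 hv2
  have iB := intW τn1 (fun x => τn x - τn1 x) hτn1m hem2 hτn12 he2
  have iC := intW τn1 (fun x => τn x - σe x) hτn1m hdm hτn12 hd2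
  have hκσ := hκint σe hσm hσ2
  have hκτn := hκint τn hτnm hτn2
  have hκτn1 := hκint τn1 hτn1m hτn12
  -- Fact 2 : energy decrease dominates quadratic decrease
  have hpt2 : ∀ x ∈ Ω, kappaStar q em ep ‖τn1 x‖ + (1/2)*(w x * ⟪τn x, τn x⟫)
      ≤ kappaStar q em ep ‖τn x‖ + (1/2)*(w x * ⟪τn1 x, τn1 x⟫) := by
    intro x _
    have h := kappaStar_le_quad (c := max em (min ‖τn x‖ ep)) (t := ‖τn1 x‖) hq1 hq2 hem hme
      (norm_nonneg _) (le_max_left _ _) (max_le hme (min_le_right _ _))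
    have h2 := kappaStar_eq (q := q) hem hme ‖τn x‖
    rw [real_inner_self_eq_norm_sq, real_inner_self_eq_norm_sq]
    simp only [hwdef]
    linarith
  have him2 := setIntegral_mono_on (hκτn1.add (i11.const_mul (1/2)))
    (hκτn.add (i22.const_mul (1/2))) hΩ hpt2
  simp only [Pi.add_apply] at him2
  rw [integral_add hκτn1 (i11.const_mul (1/2)), integral_add hκτn (i22.const_mul (1/2)),
    integral_const_mul, integral_const_mul] at him2
  -- Fact 3 : strong convexity at τn
  have hpt3 : ∀ x ∈ Ω,
      (kappaStar q em ep ‖τn x‖ - kappaStar q em ep ‖σe x‖)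
        + θ*(w x * ⟪τn x - σe x, τn x - σe x⟫)
      ≤ w x * ⟪τn x, τn x - σe x⟫ := by
    intro x _
    have h := sc_vector hq1 hq2 hem hme (τn x) (σe x)
    rw [show σe x - τn x = -(τn x - σe x) from (neg_sub (τn x) (σe x)).symm, norm_neg,
      inner_neg_right] at h
    have e3 : ⟪τn x - σe x, τn x - σe x⟫ = ‖τn x - σe x‖^2 := real_inner_self_eq_norm_sq _
    have hθwx : θ * (max em (min ‖τn x‖ ep))^(q-2) ≤ (q-1)*ep^(q-2)/2 := by
      simpa only [hwdef] using hθw x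
    simp only [hwdef]
    rw [e3]
    nlinarith [h, mul_le_mul_of_nonneg_right hθwx (sq_nonneg ‖τn x - σe x‖)]
  have hκd : IntegrableOn
      (fun x => kappaStar q em ep ‖τn x‖ - kappaStar q em ep ‖σe x‖) Ω volume :=
    hκτn.sub hκσ
  have hInt3L : IntegrableOn (fun x =>
      (kappaStar q em ep ‖τn x‖ - kappaStar q em ep ‖σe x‖)
        + θ*(w x * ⟪τn x - σe x, τn x - σe x⟫)) Ω volume := hκd.add (iV.const_mul θ)
  have him3 := setIntegral_mono_on hInt3L iM hΩ hpt3
  rw [integral_add hκd (iV.const_mul θ), integral_sub hκτn hκσ,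
    integral_const_mul] at him3
  -- Fact 1 : the quadratic identity
  have hptid : ∀ x : EuclideanSpace ℝ (Fin d),
      (1/2)*(w x*⟪τn x,τn x⟫) - (1/2)*(w x*⟪τn1 x,τn1 x⟫)
      = θ*(w x*⟪τn x, τn x - σe x⟫) - (θ^2/2)*(w x*⟪τn x - σe x, τn x - σe x⟫)
        + (1/2)*(w x*⟪v x, v x⟫) + (w x*⟪τn1 x, τn x - τn1 x⟫)
        - θ*(w x*⟪τn1 x, τn x - σe x⟫) := by
    intro x
    simp only [hvdef]
    simp only [inner_sub_left, inner_sub_right, real_inner_smul_left, real_inner_smul_right]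
    rw [real_inner_comm (τn1 x) (τn x), real_inner_comm (σe x) (τn x),
      real_inner_comm (σe x) (τn1 x)]
    ring
  have fact1 : (1/2)*(∫ x in Ω, w x*⟪τn x,τn x⟫) - (1/2)*(∫ x in Ω, w x*⟪τn1 x,τn1 x⟫)
      = θ*(∫ x in Ω, w x*⟪τn x, τn x - σe x⟫)
        - (θ^2/2)*(∫ x in Ω, w x*⟪τn x - σe x, τn x - σe x⟫)
        + (1/2)*(∫ x in Ω, w x*⟪v x, v x⟫) := by
    have h1 : ∫ x in Ω, ((1/2)*(w x*⟪τn x,τn x⟫) - (1/2)*(w x*⟪τn1 x,τn1 x⟫))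
        = ∫ x in Ω, (θ*(w x*⟪τn x, τn x - σe x⟫)
            - (θ^2/2)*(w x*⟪τn x - σe x, τn x - σe x⟫)
            + (1/2)*(w x*⟪v x, v x⟫) + (w x*⟪τn1 x, τn x - τn1 x⟫)
            - θ*(w x*⟪τn1 x, τn x - σe x⟫)) :=
      integral_congr_ae (Filter.Eventually.of_forall fun x => hptid x)
    rw [integral_sub (i11.const_mul (1/2)) (i22.const_mul (1/2)),
      integral_const_mul, integral_const_mul] at h1
    have hA1 : IntegrableOn (fun x =>
        θ*(w x*⟪τn x, τn x - σe x⟫)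
          - (θ^2/2)*(w x*⟪τn x - σe x, τn x - σe x⟫)) Ω volume :=
      (iM.const_mul θ).sub (iV.const_mul (θ^2/2))
    have hA2 : IntegrableOn (fun x =>
        θ*(w x*⟪τn x, τn x - σe x⟫)
          - (θ^2/2)*(w x*⟪τn x - σe x, τn x - σe x⟫)
          + (1/2)*(w x*⟪v x, v x⟫)) Ω volume := hA1.add (iP.const_mul (1/2))
    have hA3 : IntegrableOn (fun x =>
        θ*(w x*⟪τn x, τn x - σe x⟫)
          - (θ^2/2)*(w x*⟪τn x - σe x, τn x - σe x⟫)
          + (1/2)*(w x*⟪v x, v x⟫) + (w x*⟪τn1 x, τn x - τn1 x⟫)) Ω volume := hA2.add iB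
    rw [integral_sub hA3 (iC.const_mul θ),
      integral_add hA2 iB,
      integral_add hA1 (iP.const_mul (1/2)),
      integral_sub (iM.const_mul θ) (iV.const_mul (θ^2/2)),
      integral_const_mul, integral_const_mul, integral_const_mul, integral_const_mul,
      hO1', hO2'] at h1
    linarith [h1]
  -- nonnegativity
  have hP : 0 ≤ ∫ x in Ω, w x*⟪v x, v x⟫ :=
    setIntegral_nonneg hΩ (fun x _ => mul_nonneg (hwpos x).le real_inner_self_nonneg)
  have hV : 0 ≤ ∫ x in Ω, w x*⟪τn x - σe x, τn x - σe x⟫ :=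
    setIntegral_nonneg hΩ (fun x _ => mul_nonneg (hwpos x).le real_inner_self_nonneg)
  -- conclusion
  nlinarith [him2, him3, fact1, hP, hV, mul_le_mul_of_nonneg_left him3 hθpos.le,
    mul_nonneg (mul_nonneg hθpos.le hθpos.le) hV]
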